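/- For every finite undirected graph G and every capacity function κ: V(G) → ℕ, G has a κ-DP-subgraph; that is, there exists a spanning bipartite subgraph H of G with partite sets D and P such that every vertex i ∈ D has degree in H equal to min(κ(i), deg_G(i)), and every vertex i ∈ P has positive degree in H. -/

import Mathlib

open Finset

lemma dp_core {V : Type*} [Fintype V] [DecidableEq V] (G : SimpleGraph V)
    [DecidableRel G.Adj] (A : Finset V) :
    ∀ (r : V → ℕ), (∀ v ∈ A, r v ≤ (G.neighborFinset v ∩ A).card) →
    ∃ (D : Finset V) (f : V → Finset V), D ⊆ A ∧
      (∀ d ∈ D, f d ⊆ G.neighborFinset d ∩ (A \ D) ∧ (f d).card = r d) ∧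
      (∀ p ∈ A \ D, ∃ d ∈ D, p ∈ f d) := by
  induction A using Finset.strongInduction with
  | _ A ih =>
  intro r hr
  by_cases h0 : ∀ v ∈ A, r v = 0
  · refine ⟨A, fun _ => ∅, subset_rfl,
      fun d hd => ⟨empty_subset _, by simp [h0 d hd]⟩, by simp⟩
  · push_neg at h0
    have hvS : ∃ v ∈ A, ∃ S ⊆ G.neighborFinset v ∩ A, S.card = r v ∧
        (∀ d ∈ A, d ∉ S → d ≠ v → G.Adj d v →
          r d < (G.neighborFinset d ∩ A).card) := by
      by_cases hsat : ∃ v ∈ A, 1 ≤ r v ∧ r v = (G.neighborFinset v ∩ A).card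
      · obtain ⟨v, hvA, -, hveq⟩ := hsat
        refine ⟨v, hvA, G.neighborFinset v ∩ A, subset_rfl, hveq.symm, ?_⟩
        intro d hdA hdS _ hadj
        exact absurd (Finset.mem_inter.mpr
          ⟨(G.mem_neighborFinset v d).mpr hadj.symm, hdA⟩) hdS
      · obtain ⟨v, hvA, hv0⟩ := h0
        obtain ⟨S, hS, hScard⟩ := Finset.exists_subset_card_eq (hr v hvA)
        refine ⟨v, hvA, S, hS, hScard, ?_⟩
        intro d hdA _ _ hadj
        rcases lt_or_eq_of_le (hr d hdA) with h | h
        · exact h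
        · exfalso
          have hd1 : 1 ≤ (G.neighborFinset d ∩ A).card :=
            Finset.card_pos.mpr ⟨v, Finset.mem_inter.mpr
              ⟨(G.mem_neighborFinset d v).mpr hadj, hvA⟩⟩
          exact hsat ⟨d, hdA, by omega, h⟩
    obtain ⟨v, hvA, S, hSsub, hScard, hQ⟩ := hvS
    have hSN : S ⊆ G.neighborFinset v := hSsub.trans Finset.inter_subset_left
    have hSA : S ⊆ A := hSsub.trans Finset.inter_subset_right
    have hvS' : v ∉ S := fun h => G.irrefl ((G.mem_neighborFinset v v).mp (hSN h))
    have hins : insert v S ⊆ A := Finset.insert_subset hvA hSA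
    set A' : Finset V := A \ insert v S with hA'def
    have hA'ss : A' ⊂ A :=
      Finset.sdiff_ssubset hins ⟨v, Finset.mem_insert_self v S⟩
    set r' : V → ℕ := fun u => min (r u) ((G.neighborFinset u ∩ A').card) with hr'def
    obtain ⟨D', f', hD'A, hf', hcov'⟩ := ih A' hA'ss r' (fun u _ => min_le_right _ _)
    have hA'A : A' ⊆ A := Finset.sdiff_subset
    have hunion : A' ∪ insert v S = A := Finset.sdiff_union_of_subset hins
    have hkey : ∀ d ∈ D', r d - r' d ≤ (G.neighborFinset d ∩ S).card := by
      intro d hd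
      have hdA' : d ∈ A' := hD'A hd
      have hdA : d ∈ A := hA'A hdA'
      have hdni : d ∉ insert v S := (Finset.mem_sdiff.mp hdA').2
      have hdv : d ≠ v := fun h => hdni (h ▸ Finset.mem_insert_self v S)
      have hdS : d ∉ S := fun h => hdni (Finset.mem_insert_of_mem h)
      rcases le_or_gt (r d) ((G.neighborFinset d ∩ A').card) with h | h
      · have : r' d = r d := min_eq_left h
        omega
      · have hr'd : r' d = (G.neighborFinset d ∩ A').card := min_eq_right h.le
        have hsplit : (G.neighborFinset d ∩ A).card =
            (G.neighborFinset d ∩ A').card + (G.neighborFinset d ∩ insert v S).card := by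
          rw [← Finset.card_union_of_disjoint
            (Finset.disjoint_of_subset_left Finset.inter_subset_right
              (Finset.disjoint_of_subset_right Finset.inter_subset_right
                Finset.sdiff_disjoint)),
            ← Finset.inter_union_distrib_left, hunion]
        have hb : r d ≤ (G.neighborFinset d ∩ A').card + (G.neighborFinset d ∩ S).card := by
          by_cases hadj : G.Adj d v
          · have h1 := hQ d hdA hdS hdv hadj
            have h2 : (G.neighborFinset d ∩ insert v S).card ≤
                (G.neighborFinset d ∩ S).card + 1 := by
              have hsub : G.neighborFinset d ∩ insert v S ⊆
                  insert v (G.neighborFinset d ∩ S) := by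
                intro x hx
                obtain ⟨hx1, hx2⟩ := Finset.mem_inter.mp hx
                rcases Finset.mem_insert.mp hx2 with h | h
                · exact h ▸ Finset.mem_insert_self _ _
                · exact Finset.mem_insert_of_mem (Finset.mem_inter.mpr ⟨hx1, h⟩)
              calc (G.neighborFinset d ∩ insert v S).card
                  ≤ (insert v (G.neighborFinset d ∩ S)).card := Finset.card_le_card hsub
                _ ≤ (G.neighborFinset d ∩ S).card + 1 := Finset.card_insert_le _ _
            omega
          · have h2 : G.neighborFinset d ∩ insert v S ⊆ G.neighborFinset d ∩ S := by
              intro x hx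
              obtain ⟨hx1, hx2⟩ := Finset.mem_inter.mp hx
              rcases Finset.mem_insert.mp hx2 with h | h
              · exact absurd ((G.mem_neighborFinset d x).mp hx1)
                  (by rw [h]; exact hadj)
              · exact Finset.mem_inter.mpr ⟨hx1, h⟩
            have h1 := hr d hdA
            have h3 := Finset.card_le_card h2
            omega
        omega
    have hg : ∀ d : V, ∃ gd : Finset V, d ∈ D' →
        gd ⊆ G.neighborFinset d ∩ S ∧ gd.card = r d - r' d := by
      intro d
      by_cases hd : d ∈ D'
      · obtain ⟨gd, h1, h2⟩ := Finset.exists_subset_card_eq (hkey d hd)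
        exact ⟨gd, fun _ => ⟨h1, h2⟩⟩
      · exact ⟨∅, fun h => absurd h hd⟩
    choose g hgspec using hg
    have hvA' : v ∉ A' := fun h => (Finset.mem_sdiff.mp h).2 (Finset.mem_insert_self v S)
    have hvD' : v ∉ D' := fun h => hvA' (hD'A h)
    have hSnD : ∀ x ∈ S, x ∉ insert v D' := by
      intro x hx hmem
      rcases Finset.mem_insert.mp hmem with h | h
      · exact hvS' (h ▸ hx)
      · exact (Finset.mem_sdiff.mp (hD'A h)).2 (Finset.mem_insert_of_mem hx)
    have hsubAD : A' \ D' ⊆ A \ insert v D' := by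
      intro x hx
      obtain ⟨hx1, hx2⟩ := Finset.mem_sdiff.mp hx
      obtain ⟨hxA, hxni⟩ := Finset.mem_sdiff.mp hx1
      refine Finset.mem_sdiff.mpr ⟨hxA, fun h => ?_⟩
      rcases Finset.mem_insert.mp h with h | h
      · exact hxni (h ▸ Finset.mem_insert_self v S)
      · exact hx2 h
    refine ⟨insert v D', fun d => if d = v then S else f' d ∪ g d,
      Finset.insert_subset hvA (hD'A.trans hA'A), ?_, ?_⟩
    · intro d hd
      rcases Finset.mem_insert.mp hd with rfl | hd'
      · simp only [if_pos rfl]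
        refine ⟨fun x hx => Finset.mem_inter.mpr
          ⟨hSN hx, Finset.mem_sdiff.mpr ⟨hSA hx, hSnD x hx⟩⟩, hScard⟩
      · have hdv : d ≠ v := fun h => hvD' (h ▸ hd')
        simp only [if_neg hdv]
        obtain ⟨hsub', hcard'⟩ := hf' d hd'
        obtain ⟨hgsub, hgcard⟩ := hgspec d hd'
        constructor
        · refine Finset.union_subset ?_ ?_
          · exact hsub'.trans (Finset.inter_subset_inter Finset.Subset.rfl hsubAD)
          · intro x hx
            obtain ⟨hx1, hx2⟩ := Finset.mem_inter.mp (hgsub hx)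
            exact Finset.mem_inter.mpr ⟨hx1,
              Finset.mem_sdiff.mpr ⟨hSA hx2, hSnD x hx2⟩⟩
        · have hdisj : Disjoint (f' d) (g d) := by
            refine Finset.disjoint_left.mpr fun x hx1 hx2 => ?_
            have hxA' : x ∈ A' :=
              (Finset.mem_sdiff.mp (Finset.mem_inter.mp (hsub' hx1)).2).1
            have hxS : x ∈ S := (Finset.mem_inter.mp (hgsub hx2)).2
            exact (Finset.mem_sdiff.mp hxA').2 (Finset.mem_insert_of_mem hxS)
          rw [Finset.card_union_of_disjoint hdisj, hcard', hgcard]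
          have hle : r' d ≤ r d := min_le_left _ _
          omega
    · intro p hp
      obtain ⟨hpA, hpD⟩ := Finset.mem_sdiff.mp hp
      have hpv : p ≠ v := fun h => hpD (h ▸ Finset.mem_insert_self v D')
      have hpD' : p ∉ D' := fun h => hpD (Finset.mem_insert_of_mem h)
      by_cases hpS : p ∈ S
      · exact ⟨v, Finset.mem_insert_self v D', by simp only [if_pos rfl]; exact hpS⟩
      · have hpA' : p ∈ A' := Finset.mem_sdiff.mpr ⟨hpA, fun h => by
          rcases Finset.mem_insert.mp h with h | h
          · exact hpv h
          · exact hpS h⟩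
        obtain ⟨d, hd, hpf⟩ := hcov' p (Finset.mem_sdiff.mpr ⟨hpA', hpD'⟩)
        have hdv : d ≠ v := fun h => hvD' (h ▸ hd)
        exact ⟨d, Finset.mem_insert_of_mem hd,
          by simp only [if_neg hdv]; exact Finset.mem_union_left _ hpf⟩


/-- `H` is a κ-DP-subgraph of `G` with partite sets `D` and `P`:
a spanning bipartite subgraph whose edges go between `D` and `P`,
with `deg_H i = min (κ i) (deg_G i)` for `i ∈ D` and positive degree on `P`. -/
def IsDPSubgraph {V : Type*} (G : SimpleGraph V) (κ : V → ℕ)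
    (H : SimpleGraph V) (D P : Set V) : Prop :=
  H ≤ G ∧ D ∪ P = Set.univ ∧ D ∩ P = ∅ ∧
  (∀ ⦃u v⦄, H.Adj u v → (u ∈ D ∧ v ∈ P) ∨ (u ∈ P ∧ v ∈ D)) ∧
  (∀ i ∈ D, (H.neighborSet i).ncard = min (κ i) ((G.neighborSet i).ncard)) ∧
  (∀ i ∈ P, 0 < (H.neighborSet i).ncard)

/-- Every finite graph with any capacity function has a κ-DP-subgraph. -/
theorem exists_DPSubgraph {V : Type*} [Fintype V] (G : SimpleGraph V) (κ : V → ℕ) :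
    ∃ (H : SimpleGraph V) (D P : Set V), IsDPSubgraph G κ H D P := by
  classical
  set r : V → ℕ := fun v => min (κ v) ((G.neighborFinset v).card) with hrdef
  obtain ⟨D, f, -, hDf, hcov⟩ := dp_core G Finset.univ r
    (fun v _ => by rw [Finset.inter_univ]; exact min_le_right _ _)
  have hfP : ∀ d ∈ D, ∀ x ∈ f d, G.Adj d x ∧ x ∉ D := by
    intro d hd x hx
    obtain ⟨h1, h2⟩ := Finset.mem_inter.mp ((hDf d hd).1 hx)
    exact ⟨(G.mem_neighborFinset d x).mp h1, (Finset.mem_sdiff.mp h2).2⟩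
  set H : SimpleGraph V :=
    { Adj := fun u w => (u ∈ D ∧ w ∈ f u) ∨ (w ∈ D ∧ u ∈ f w)
      symm := ⟨fun u w h => h.elim Or.inr Or.inl⟩
      loopless := ⟨fun u h => by
        rcases h with ⟨h1, h2⟩ | ⟨h1, h2⟩ <;> exact (hfP u h1 u h2).2 h1⟩ } with hHdef
  have hAdj : ∀ u w, H.Adj u w ↔ (u ∈ D ∧ w ∈ f u) ∨ (w ∈ D ∧ u ∈ f w) := by
    intro u w; rw [hHdef]
  have hNS : ∀ i ∈ D, H.neighborSet i = ↑(f i) := by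
    intro i hi
    ext w
    simp only [SimpleGraph.mem_neighborSet, hAdj, Finset.coe_sort_coe, Finset.mem_coe]
    constructor
    · rintro (⟨h1, h2⟩ | ⟨h1, h2⟩)
      · exact h2
      · exact absurd hi (hfP w h1 i h2).2
    · exact fun h => Or.inl ⟨hi, h⟩
  refine ⟨H, ↑D, (↑D : Set V)ᶜ, ?_, Set.union_compl_self _, Set.inter_compl_self _,
    ?_, ?_, ?_⟩
  · intro u w h
    rcases (hAdj u w).mp h with ⟨h1, h2⟩ | ⟨h1, h2⟩
    · exact (hfP u h1 w h2).1
    · exact ((hfP w h1 u h2).1).symm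
  · intro u w h
    rcases (hAdj u w).mp h with ⟨h1, h2⟩ | ⟨h1, h2⟩
    · exact Or.inl ⟨Finset.mem_coe.mpr h1, fun hc => (hfP u h1 w h2).2 (Finset.mem_coe.mp hc)⟩
    · exact Or.inr ⟨fun hc => (hfP w h1 u h2).2 (Finset.mem_coe.mp hc), Finset.mem_coe.mpr h1⟩
  · intro i hi
    have hiD : i ∈ D := Finset.mem_coe.mp hi
    rw [hNS i hiD, Set.ncard_coe_finset, (hDf i hiD).2]
    show min (κ i) ((G.neighborFinset i).card) = min (κ i) ((G.neighborSet i).ncard)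
    congr 1
    rw [SimpleGraph.neighborFinset_def, Set.ncard_eq_toFinset_card']
  · intro i hi
    have hiD : i ∉ D := fun hc => hi (Finset.mem_coe.mpr hc)
    obtain ⟨d, hd, hfd⟩ := hcov i (Finset.mem_sdiff.mpr ⟨Finset.mem_univ i, hiD⟩)
    exact (Set.ncard_pos (Set.toFinite _)).mpr ⟨d, (hAdj i d).mpr (Or.inr ⟨hd, hfd⟩)⟩
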